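/- Fix offspring and cooperation distributions L_o and L_c on the nonnegative integers, let m ≥ 1 be an integer, let Z^{(m)} denote a DBPC with these distributions started at m, and let q := P(∃ g ∈ ℕ: Z^{(1)}_g = 0) be the extinction probability of the DBPC started at 1. Then, because cooperation between individuals can only create additional offspring, the extinction probability started from m individuals satisfies P(∃ g ∈ ℕ: Z^{(m)}_g = 0) ≤ q^m. -/

import Mathlib

open MeasureTheory ProbabilityTheory Filter Finset
open scoped ENNReal

namespace DBPCaux

/-! ### Index bookkeeping and the subfamily processes -/

abbrev DIdx : Type := (ℕ × ℕ) ⊕ (ℕ × ℕ × ℕ)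

/-- generation of an index -/
def dGen : DIdx → ℕ := Sum.elim Prod.fst Prod.fst

variable {Ω : Type*}

/-- the combined family of offspring and cooperation variables -/
def fam (X : ℕ → ℕ → Ω → ℕ) (Y : ℕ → ℕ → ℕ → Ω → ℕ) : DIdx → Ω → ℕ :=
  fun t => Sum.elim (fun q : ℕ × ℕ => X q.1 q.2)
    (fun q : ℕ × ℕ × ℕ => Y q.1 q.2.1 q.2.2) t

/-- offsets: partial sums of a count vector -/
def offs (v : ℕ → ℕ) (r : ℕ) : ℕ := ∑ s ∈ Finset.range r, v s

lemma offs_zero (v : ℕ → ℕ) : offs v 0 = 0 := rfl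

lemma offs_succ (v : ℕ → ℕ) (r : ℕ) : offs v (r+1) = offs v r + v r :=
  Finset.sum_range_succ v r

lemma offs_mono (v : ℕ → ℕ) {r r' : ℕ} (h : r ≤ r') : offs v r ≤ offs v r' :=
  Finset.sum_le_sum_of_subset (Finset.range_subset_range.2 h)

lemma offs_congr {v v' : ℕ → ℕ} (r : ℕ) (h : ∀ s < r, v s = v' s) :
    offs v r = offs v' r :=
  Finset.sum_congr rfl fun s hs => h s (Finset.mem_range.1 hs)

/-- one step count for an interval block `(off, off+c]` at generation `g` -/
def onestep (X : ℕ → ℕ → Ω → ℕ) (Y : ℕ → ℕ → ℕ → Ω → ℕ) (g off c : ℕ) (ω : Ω) : ℕ :=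
  (∑ i ∈ Finset.Ioc off (off + c), X g i ω)
  + ∑ i ∈ Finset.Ioc off (off + c), ∑ j ∈ Finset.Ioo off i, Y g i j ω

/-- one step of the vector of subfamily counts -/
def stepVec (X : ℕ → ℕ → Ω → ℕ) (Y : ℕ → ℕ → ℕ → Ω → ℕ) (g : ℕ) (v : ℕ → ℕ)
    (ω : Ω) : ℕ → ℕ :=
  fun r => onestep X Y g (offs v r) (v r) ω

/-- the vector process of subfamily counts, `G` steps, using generations `g₀+1, ..., g₀+G` -/
def WitV (X : ℕ → ℕ → Ω → ℕ) (Y : ℕ → ℕ → ℕ → Ω → ℕ) : ℕ → ℕ → (ℕ → ℕ) → Ω → ℕ → ℕ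
  | 0, _, v, _ => v
  | (G+1), g₀, v, ω => WitV X Y G (g₀+1) (stepVec X Y (g₀+1) v ω) ω

variable {X : ℕ → ℕ → Ω → ℕ} {Y : ℕ → ℕ → ℕ → Ω → ℕ}

@[simp] lemma WitV_zero (g₀ : ℕ) (v : ℕ → ℕ) (ω : Ω) : WitV X Y 0 g₀ v ω = v := rfl

lemma WitV_succ (G g₀ : ℕ) (v : ℕ → ℕ) (ω : Ω) :
    WitV X Y (G+1) g₀ v ω = WitV X Y G (g₀+1) (stepVec X Y (g₀+1) v ω) ω := rfl

lemma WitV_snoc (G g₀ : ℕ) (v : ℕ → ℕ) (ω : Ω) :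
    WitV X Y (G+1) g₀ v ω = stepVec X Y (g₀+G+1) (WitV X Y G g₀ v ω) ω := by
  induction G generalizing g₀ v with
  | zero => rfl
  | succ G ih =>
      rw [WitV_succ, ih, ← WitV_succ]
      have h : g₀ + 1 + G + 1 = g₀ + (G + 1) + 1 := by omega
      rw [h]

lemma stepVec_congr {v v' : ℕ → ℕ} (g : ℕ) (ω : Ω) (r : ℕ) (h : ∀ s ≤ r, v s = v' s) :
    stepVec X Y g v ω r = stepVec X Y g v' ω r := by
  unfold stepVec
  rw [offs_congr r fun s hs => h s hs.le, h r le_rfl]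

/-- coordinate `r` of `WitV` only depends on coordinates `≤ r` of `v` -/
lemma WitV_congr {v v' : ℕ → ℕ} (G g₀ : ℕ) (ω : Ω) (r : ℕ) (h : ∀ s ≤ r, v s = v' s) :
    WitV X Y G g₀ v ω r = WitV X Y G g₀ v' ω r := by
  induction G generalizing g₀ v v' with
  | zero => exact h r le_rfl
  | succ G ih =>
      rw [WitV_succ, WitV_succ]
      exact ih _ fun s hs => stepVec_congr _ _ _ fun u hu => h u (hu.trans hs)

lemma onestep_zero (g off : ℕ) (ω : Ω) : onestep X Y g off 0 ω = 0 := by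
  simp [onestep]

lemma stepVec_support {v : ℕ → ℕ} {M : ℕ} (hv : ∀ r, M ≤ r → v r = 0) (g : ℕ) (ω : Ω) :
    ∀ r, M ≤ r → stepVec X Y g v ω r = 0 := by
  intro r hr
  unfold stepVec
  rw [hv r hr, onestep_zero]

lemma WitV_support (G : ℕ) : ∀ (g₀ : ℕ) (v : ℕ → ℕ) (M : ℕ), (∀ r, M ≤ r → v r = 0) →
    ∀ (ω : Ω) (r : ℕ), M ≤ r → WitV X Y G g₀ v ω r = 0 := by
  induction G with
  | zero => exact fun g₀ v M hv ω r hr => hv r hr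
  | succ G ih =>
      intro g₀ v M hv ω r hr
      rw [WitV_succ]
      exact ih _ _ M (stepVec_support hv _ _) ω r hr

/-! ### deterministic domination -/

lemma biUnion_Ioc (w : ℕ → ℕ) (m : ℕ) :
    (Finset.range m).biUnion (fun r => Finset.Ioc (offs w r) (offs w r + w r)) =
      Finset.Ioc 0 (offs w m) := by
  induction m with
  | zero => rfl
  | succ m ih =>
      rw [Finset.range_add_one, Finset.biUnion_insert, ih, Finset.union_comm,
        offs_succ]
      exact Finset.Ioc_union_Ioc_eq_Ioc (Nat.zero_le _) (Nat.le_add_right _ _)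

lemma Ioc_pairwiseDisjoint (w : ℕ → ℕ) (m : ℕ) :
    (↑(Finset.range m) : Set ℕ).PairwiseDisjoint
      (fun r => Finset.Ioc (offs w r) (offs w r + w r)) := by
  have hpair : ∀ r r', r < r' →
      Disjoint (Finset.Ioc (offs w r) (offs w r + w r))
        (Finset.Ioc (offs w r') (offs w r' + w r')) := by
    intro r r' hlt
    refine Finset.disjoint_left.2 fun i hi hi' => ?_
    rw [Finset.mem_Ioc] at hi hi'
    have h1 : offs w r + w r ≤ offs w r' := by
      rw [← offs_succ]; exact offs_mono w hlt
    omega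
  intro r _ r' _ hne
  rcases Nat.lt_or_ge r r' with hlt | hge
  · exact hpair r r' hlt
  · exact (hpair r' r (by omega)).symm

lemma stepSum_le (w : ℕ → ℕ) (m N g : ℕ) (ω : Ω) (h : offs w m ≤ N) :
    ∑ r ∈ Finset.range m, onestep X Y g (offs w r) (w r) ω ≤ onestep X Y g 0 N ω := by
  unfold onestep
  rw [Finset.sum_add_distrib]
  have hsub : Finset.Ioc 0 (offs w m) ⊆ Finset.Ioc 0 (0 + N) := by
    rw [Nat.zero_add]
    exact Finset.Ioc_subset_Ioc_right h
  apply Nat.add_le_add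
  · rw [← Finset.sum_biUnion (Ioc_pairwiseDisjoint w m), biUnion_Ioc]
    exact Finset.sum_le_sum_of_subset hsub
  · calc ∑ r ∈ Finset.range m, ∑ i ∈ Finset.Ioc (offs w r) (offs w r + w r),
          ∑ j ∈ Finset.Ioo (offs w r) i, Y g i j ω
        ≤ ∑ r ∈ Finset.range m, ∑ i ∈ Finset.Ioc (offs w r) (offs w r + w r),
          ∑ j ∈ Finset.Ioo 0 i, Y g i j ω := by
          refine Finset.sum_le_sum fun r _ => Finset.sum_le_sum fun i _ => ?_
          exact Finset.sum_le_sum_of_subset (Finset.Ioo_subset_Ioo_left (Nat.zero_le _))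
      _ = ∑ i ∈ Finset.Ioc 0 (offs w m), ∑ j ∈ Finset.Ioo 0 i, Y g i j ω := by
          rw [← Finset.sum_biUnion (Ioc_pairwiseDisjoint w m), biUnion_Ioc]
      _ ≤ ∑ i ∈ Finset.Ioc 0 (0 + N), ∑ j ∈ Finset.Ioo 0 i, Y g i j ω :=
          Finset.sum_le_sum_of_subset hsub

/-! ### measurability -/

/-- composition with a countably-valued random parameter is measurable -/
lemma meas_param {mΩ' : MeasurableSpace Ω} {β : Type*} [Countable β] {N : Ω → β}
    (hN : ∀ b, MeasurableSet[mΩ'] {ω | N ω = b}) {F : β → Ω → ℕ}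
    (hF : ∀ b, Measurable[mΩ'] (F b)) : Measurable[mΩ'] fun ω => F (N ω) ω := by
  apply measurable_to_countable'
  intro c
  have h : (fun ω => F (N ω) ω) ⁻¹' {c} = ⋃ b, ({ω | N ω = b} ∩ F b ⁻¹' {c}) := by
    ext ω
    simp only [Set.mem_preimage, Set.mem_singleton_iff, Set.mem_iUnion, Set.mem_inter_iff,
      Set.mem_setOf_eq]
    constructor
    · intro h; exact ⟨N ω, rfl, h⟩
    · rintro ⟨b, hb, h⟩; rw [hb]; exact h
  rw [h]
  exact MeasurableSet.iUnion fun b => (hN b).inter (hF b (measurableSet_singleton c))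

lemma onestep_meas {mΩ' : MeasurableSpace Ω} {g : ℕ} (hX : ∀ i, Measurable[mΩ'] (X g i))
    (hY : ∀ i j, Measurable[mΩ'] (Y g i j)) (off c : ℕ) :
    Measurable[mΩ'] (onestep X Y g off c) :=
  ((Finset.measurable_sum _ fun i _ => hX i).add
    (Finset.measurable_sum _ fun i _ => Finset.measurable_sum _ fun j _ => hY i j))

lemma stepVec_meas {mΩ' : MeasurableSpace Ω} {g : ℕ} (hX : ∀ i, Measurable[mΩ'] (X g i))
    (hY : ∀ i j, Measurable[mΩ'] (Y g i j)) (v : ℕ → ℕ) (r : ℕ) :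
    Measurable[mΩ'] fun ω => stepVec X Y g v ω r :=
  onestep_meas hX hY _ _

/-- extend a finite vector by zero -/
def extv {r : ℕ} (b : Fin (r+1) → ℕ) : ℕ → ℕ := fun s => if h : s < r + 1 then b ⟨s, h⟩ else 0

lemma WitV_meas {mΩ' : MeasurableSpace Ω} :
    ∀ (G g₀ : ℕ), (∀ g i, g₀ < g → Measurable[mΩ'] (X g i)) →
    (∀ g i j, g₀ < g → Measurable[mΩ'] (Y g i j)) →
    ∀ (v : ℕ → ℕ) (r : ℕ), Measurable[mΩ'] fun ω => WitV X Y G g₀ v ω r := by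
  intro G
  induction G with
  | zero => intro _ _ _ _ _; exact measurable_const
  | succ G ih =>
      intro g₀ hX hY v r
      have hXg : ∀ i, Measurable[mΩ'] (X (g₀+1) i) := fun i => hX _ i (Nat.lt_succ_self _)
      have hYg : ∀ i j, Measurable[mΩ'] (Y (g₀+1) i j) := fun i j => hY _ i j (Nat.lt_succ_self _)
      have key : (fun ω => WitV X Y (G+1) g₀ v ω r) =
          fun ω => (fun b : Fin (r+1) → ℕ => fun ω' => WitV X Y G (g₀+1) (extv b) ω' r)
            (fun s : Fin (r+1) => stepVec X Y (g₀+1) v ω s.1) ω := by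
        funext ω
        simp only [WitV_succ]
        apply WitV_congr
        intro s hs
        simp [extv, Nat.lt_succ_of_le hs]
      rw [key]
      refine meas_param (N := fun ω (s : Fin (r+1)) => stepVec X Y (g₀+1) v ω s.1)
        (F := fun b ω' => WitV X Y G (g₀+1) (extv b) ω' r) ?_ ?_
      · intro b
        have h : {ω | (fun s : Fin (r+1) => stepVec X Y (g₀+1) v ω s.1) = b} =
            ⋂ s : Fin (r+1), {ω | stepVec X Y (g₀+1) v ω s.1 = b s} := by
          ext ω; simp [funext_iff]
        rw [h]
        exact MeasurableSet.iInter fun s =>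
          (stepVec_meas hXg hYg v s.1) (measurableSet_singleton (b s))
      · intro b
        exact ih (g₀+1) (fun g i hg => hX g i (Nat.lt_of_succ_lt hg))
          (fun g i j hg => hY g i j (Nat.lt_of_succ_lt hg)) (extv b) r

/-! ### the canonical one-step distribution -/

def marg (Lo Lc : PMF ℕ) : DIdx → PMF ℕ := Sum.elim (fun _ => Lo) (fun _ => Lc)

noncomputable def conv1 (L : PMF ℕ) (d : ℕ → ℝ≥0∞) : ℕ → ℝ≥0∞ :=
  fun n => ∑ c ∈ Finset.range (n+1), L c * d (n - c)

noncomputable def delta0 : ℕ → ℝ≥0∞ := fun n => if n = 0 then 1 else 0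

noncomputable def Dconv (Lo Lc : PMF ℕ) (a b : ℕ) : ℕ → ℝ≥0∞ :=
  (conv1 Lo)^[a] ((conv1 Lc)^[b] delta0)

lemma Dconv_succ_left (Lo Lc : PMF ℕ) (a b : ℕ) :
    Dconv Lo Lc (a+1) b = conv1 Lo (Dconv Lo Lc a b) :=
  Function.iterate_succ_apply' _ _ _

lemma Dconv_zero_succ (Lo Lc : PMF ℕ) (b : ℕ) :
    Dconv Lo Lc 0 (b+1) = conv1 Lc (Dconv Lo Lc 0 b) := by
  unfold Dconv
  simp only [Function.iterate_zero_apply]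
  exact Function.iterate_succ_apply' _ _ _

def countL (u : Finset DIdx) : ℕ := (u.filter (fun t => t.isLeft = true)).card
def countR (u : Finset DIdx) : ℕ := (u.filter (fun t => (!t.isLeft) = true)).card

/-- the finite-generation extinction probabilities of the DBPC -/
noncomputable def pext (Lo Lc : PMF ℕ) : ℕ → ℕ → ℝ≥0∞
  | 0, k => if k = 0 then 1 else 0
  | (G+1), k => ∑' n, Dconv Lo Lc k (k.choose 2) n * pext Lo Lc G n

lemma pext_zero (Lo Lc : PMF ℕ) (k : ℕ) :
    pext Lo Lc 0 k = if k = 0 then 1 else 0 := rfl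

lemma pext_succ (Lo Lc : PMF ℕ) (G k : ℕ) :
    pext Lo Lc (G+1) k = ∑' n, Dconv Lo Lc k (k.choose 2) n * pext Lo Lc G n := rfl

lemma tsum_prod_fin : ∀ (M : ℕ) (h : Fin M → ℕ → ℝ≥0∞),
    ∑' κ : Fin M → ℕ, ∏ s : Fin M, h s (κ s) = ∏ s : Fin M, ∑' n, h s n := by
  intro M
  induction M with
  | zero =>
      intro h
      rw [Finset.univ_eq_empty, Finset.prod_empty]
      rw [tsum_eq_single (fun s => s.elim0) (fun b hb => (hb (funext fun s => s.elim0)).elim),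
        Finset.prod_empty]
  | succ M ih =>
      intro h
      have e := (Fin.consEquiv (fun _ : Fin (M+1) => ℕ))
      rw [← Equiv.tsum_eq (Fin.consEquiv (fun _ : Fin (M+1) => ℕ))]
      rw [ENNReal.tsum_prod']
      have hterm : ∀ (a : ℕ) (κ : Fin M → ℕ),
          ∏ s : Fin (M+1), h s ((Fin.consEquiv (fun _ : Fin (M+1) => ℕ)) (a, κ) s) =
          h 0 a * ∏ s : Fin M, h s.succ (κ s) := by
        intro a κ
        rw [Fin.prod_univ_succ]
        have h0 : ((Fin.consEquiv (fun _ : Fin (M+1) => ℕ)) (a, κ)) 0 = a := by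
          simp [Fin.consEquiv]
        have hs : ∀ s : Fin M, ((Fin.consEquiv (fun _ : Fin (M+1) => ℕ)) (a, κ)) s.succ = κ s := by
          intro s; simp [Fin.consEquiv]
        rw [h0]
        first
        | rfl
        | (congr 1; exact Finset.prod_congr rfl fun s _ => by rw [hs])
      calc ∑' (a : ℕ), ∑' (κ : Fin M → ℕ),
            ∏ s : Fin (M+1), h s ((Fin.consEquiv (fun _ : Fin (M+1) => ℕ)) (a, κ) s)
          = ∑' (a : ℕ), ∑' (κ : Fin M → ℕ), h 0 a * ∏ s : Fin M, h s.succ (κ s) := by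
            refine tsum_congr fun a => tsum_congr fun κ => hterm a κ
        _ = ∑' (a : ℕ), h 0 a * ∑' (κ : Fin M → ℕ), ∏ s : Fin M, h s.succ (κ s) := by
            refine tsum_congr fun a => ?_
            rw [ENNReal.tsum_mul_left]
        _ = (∑' (a : ℕ), h 0 a) * ∑' (κ : Fin M → ℕ), ∏ s : Fin M, h s.succ (κ s) := by
            rw [ENNReal.tsum_mul_right]
        _ = ∏ s : Fin (M+1), ∑' n, h s n := by
            rw [ih (fun s => h s.succ), Fin.prod_univ_succ]


variable {mΩ : MeasurableSpace Ω} {P : Measure Ω} [IsProbabilityMeasure P]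
variable {X : ℕ → ℕ → Ω → ℕ} {Y : ℕ → ℕ → ℕ → Ω → ℕ} {Lo Lc : PMF ℕ}

lemma famMeas (hmX : ∀ g i, Measurable (X g i)) (hmY : ∀ g i j, Measurable (Y g i j)) :
    ∀ t : DIdx, Measurable (fam X Y t) := by
  rintro (q | q)
  · exact hmX q.1 q.2
  · exact hmY q.1 q.2.1 q.2.2

/-- block independence -/
lemma blk (hmX : ∀ g i, Measurable (X g i)) (hmY : ∀ g i j, Measurable (Y g i j))
    (hindep : iIndepFun (fam X Y) P)
    (T : Set DIdx) {A B : Set Ω}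
    (hA : MeasurableSet[⨆ t ∈ T, MeasurableSpace.comap (fam X Y t) inferInstance] A)
    (hB : MeasurableSet[⨆ t ∈ Tᶜ, MeasurableSpace.comap (fam X Y t) inferInstance] B) :
    P (A ∩ B) = P A * P B := by
  have h_le : ∀ t : DIdx, MeasurableSpace.comap (fam X Y t) inferInstance ≤ mΩ :=
    fun t => (famMeas hmX hmY t).comap_le
  have h := indep_biSup_compl h_le hindep T
  exact (h.indepSet_of_measurableSet hA hB).measure_inter_eq_mul

lemma famSingleton (hmX : ∀ g i, Measurable (X g i)) (hmY : ∀ g i j, Measurable (Y g i j))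
    (hdX : ∀ g i, P.map (X g i) = Lo.toMeasure)
    (hdY : ∀ g i j, P.map (Y g i j) = Lc.toMeasure)
    (t : DIdx) (c : ℕ) :
    P (fam X Y t ⁻¹' {c}) = marg Lo Lc t c := by
  have hd : P.map (fam X Y t) = (marg Lo Lc t).toMeasure := by
    rcases t with q | q
    · exact hdX q.1 q.2
    · exact hdY q.1 q.2.1 q.2.2
  rw [← Measure.map_apply (famMeas hmX hmY t) (measurableSet_singleton c), hd,
    PMF.toMeasure_apply_singleton _ _ (measurableSet_singleton c)]

lemma peel (hmX : ∀ g i, Measurable (X g i)) (hmY : ∀ g i j, Measurable (Y g i j))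
    (hindep : iIndepFun (fam X Y) P)
    (hdX : ∀ g i, P.map (X g i) = Lo.toMeasure)
    (hdY : ∀ g i j, P.map (Y g i j) = Lc.toMeasure)
    (u : Finset DIdx) {t : DIdx} (ht : t ∈ u) (n : ℕ) :
    P {ω | ∑ s ∈ u, fam X Y s ω = n} =
      ∑ c ∈ Finset.range (n+1),
        (marg Lo Lc t c) * P {ω | ∑ s ∈ u.erase t, fam X Y s ω = n - c} := by
  classical
  have hS : Measurable fun ω => ∑ s ∈ u.erase t, fam X Y s ω :=
    Finset.measurable_sum _ fun s _ => famMeas hmX hmY s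
  have hsplit : {ω | ∑ s ∈ u, fam X Y s ω = n} =
      ⋃ c ∈ Finset.range (n+1),
        (fam X Y t ⁻¹' {c} ∩ (fun ω => ∑ s ∈ u.erase t, fam X Y s ω) ⁻¹' {n - c}) := by
    ext ω
    simp only [Set.mem_setOf_eq, Set.mem_iUnion, Set.mem_inter_iff, Set.mem_preimage,
      Set.mem_singleton_iff, Finset.mem_range]
    rw [← Finset.add_sum_erase u _ ht]
    constructor
    · intro h
      exact ⟨fam X Y t ω, by omega, rfl, by omega⟩
    · rintro ⟨c, hc, h1, h2⟩
      omega
  rw [hsplit, measure_biUnion_finset]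
  · refine Finset.sum_congr rfl fun c _ => ?_
    have hif : IndepFun (fam X Y t) (fun ω => ∑ s ∈ u.erase t, fam X Y s ω) P := by
      have h2 := (hindep.indepFun_finsetSum_of_notMem (famMeas hmX hmY)
        (Finset.notMem_erase t u)).symm
      have heq : (∑ j ∈ u.erase t, fam X Y j) = fun ω => ∑ s ∈ u.erase t, fam X Y s ω := by
        funext ω; simp [Finset.sum_apply]
      rwa [heq] at h2
    rw [hif.measure_inter_preimage_eq_mul _ _ (measurableSet_singleton _)
      (measurableSet_singleton _), famSingleton hmX hmY hdX hdY]
    rfl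
  · intro c _ c' _ hne
    simp only [Function.onFun]
    apply Set.disjoint_left.2
    rintro ω ⟨h1, _⟩ ⟨h2, _⟩
    exact hne (h1.symm.trans h2)
  · intro c _
    exact ((famMeas hmX hmY t) (measurableSet_singleton _)).inter
      (hS (measurableSet_singleton _))


lemma count_erase {u : Finset DIdx} {t : DIdx} (ht : t ∈ u) (p : DIdx → Bool) :
    (u.filter (fun s => p s = true)).card =
      ((u.erase t).filter (fun s => p s = true)).card + (if p t then 1 else 0) := by
  classical
  rw [Finset.filter_erase]
  by_cases hp : p t
  · rw [if_pos hp, Finset.card_erase_of_mem (Finset.mem_filter.2 ⟨ht, hp⟩)]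
    have : 0 < (u.filter (fun s => p s = true)).card :=
      Finset.card_pos.2 ⟨t, Finset.mem_filter.2 ⟨ht, hp⟩⟩
    omega
  · rw [if_neg hp,
      Finset.erase_eq_of_notMem (s := u.filter (fun s => p s = true)) (a := t)
        (fun h => hp (Finset.mem_filter.1 h).2)]
    omega

/-- the law of the sum of the variables indexed by a finite set -/
lemma sumlaw (hmX : ∀ g i, Measurable (X g i)) (hmY : ∀ g i j, Measurable (Y g i j))
    (hindep : iIndepFun (fam X Y) P)
    (hdX : ∀ g i, P.map (X g i) = Lo.toMeasure)
    (hdY : ∀ g i j, P.map (Y g i j) = Lc.toMeasure)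
    (u : Finset DIdx) (n : ℕ) :
    P {ω | ∑ s ∈ u, fam X Y s ω = n} = Dconv Lo Lc (countL u) (countR u) n := by
  classical
  induction u using Finset.strongInduction generalizing n with
  | _ u ih =>
    by_cases hL : (u.filter fun t => t.isLeft = true).Nonempty
    · obtain ⟨t, htf⟩ := hL
      obtain ⟨ht, hleft⟩ := Finset.mem_filter.1 htf
      have hcL := count_erase ht (fun s => s.isLeft)
      have hcR := count_erase ht (fun s => !s.isLeft)
      rw [hleft] at hcL
      have hcR' : countR u = countR (u.erase t) := by
        unfold countR
        rw [hcR]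
        simp [hleft]
      have hcL' : countL u = countL (u.erase t) + 1 := by unfold countL; simpa using hcL
      rw [peel hmX hmY hindep hdX hdY u ht n, hcL', hcR', Dconv_succ_left]
      unfold conv1
      refine Finset.sum_congr rfl fun c _ => ?_
      rw [ih (u.erase t) (Finset.erase_ssubset ht) (n - c)]
      congr 1
      rcases t with q | q
      · rfl
      · simp at hleft
    · by_cases hu : u.Nonempty
      · obtain ⟨t, ht⟩ := hu
        have hright : t.isLeft = false := by
          by_contra h
          exact hL ⟨t, Finset.mem_filter.2 ⟨ht, by simpa using h⟩⟩
        have hcL := count_erase ht (fun s => s.isLeft)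
        have hcR := count_erase ht (fun s => !s.isLeft)
        rw [hright] at hcL hcR
        have hcL' : countL u = countL (u.erase t) := by unfold countL; simpa using hcL
        have hL0 : countL u = 0 := by
          unfold countL
          rw [Finset.card_eq_zero]
          exact Finset.not_nonempty_iff_eq_empty.1 hL
        have hcR' : countR u = countR (u.erase t) + 1 := by
          unfold countR
          rw [hcR]
          simp [hright]
        have hL0' : countL (u.erase t) = 0 := by omega
        rw [peel hmX hmY hindep hdX hdY u ht n, hL0, hcR', Dconv_zero_succ]
        unfold conv1
        refine Finset.sum_congr rfl fun c _ => ?_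
        rw [ih (u.erase t) (Finset.erase_ssubset ht) (n - c), hL0']
        congr 1
        rcases t with q | q
        · simp at hright
        · rfl
      · rw [Finset.not_nonempty_iff_eq_empty.1 hu]
        have : countL (∅ : Finset DIdx) = 0 ∧ countR (∅ : Finset DIdx) = 0 := by
          constructor <;> rfl
        rw [this.1, this.2]
        unfold Dconv delta0
        simp only [Function.iterate_zero_apply]
        by_cases hn : n = 0
        · have hset : {ω : Ω | ∑ s ∈ (∅ : Finset DIdx), fam X Y s ω = n} = Set.univ := by
            ext ω; simp [hn]
          rw [hset, measure_univ, if_pos hn]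
        · have hset : {ω : Ω | ∑ s ∈ (∅ : Finset DIdx), fam X Y s ω = n} = ∅ := by
            ext ω; simp; omega
          rw [hset, measure_empty, if_neg hn]


lemma sum_meas_blk (T : Set DIdx) (u : Finset DIdx) (hu : ↑u ⊆ T) :
    Measurable[⨆ t ∈ T, MeasurableSpace.comap (fam X Y t) inferInstance]
      (fun ω => ∑ s ∈ u, fam X Y s ω) := by
  apply Finset.measurable_sum
  intro s hs
  exact measurable_iff_comap_le.2
    (le_biSup (fun t : DIdx => MeasurableSpace.comap (fam X Y t) inferInstance) (hu hs))

lemma joint (hmX : ∀ g i, Measurable (X g i)) (hmY : ∀ g i j, Measurable (Y g i j))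
    (hindep : iIndepFun (fam X Y) P)
    (hdX : ∀ g i, P.map (X g i) = Lo.toMeasure)
    (hdY : ∀ g i j, P.map (Y g i j) = Lc.toMeasure) :
    ∀ (M : ℕ) (u : ℕ → Finset DIdx) (κ : ℕ → ℕ),
    (∀ r < M, ∀ r' < M, r ≠ r' → Disjoint (u r) (u r')) →
    P {ω | ∀ r < M, ∑ s ∈ u r, fam X Y s ω = κ r} =
      ∏ r ∈ Finset.range M, P {ω | ∑ s ∈ u r, fam X Y s ω = κ r} := by
  intro M
  induction M with
  | zero =>
      intro u κ _
      have : {ω : Ω | ∀ r < 0, ∑ s ∈ u r, fam X Y s ω = κ r} = Set.univ := by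
        ext ω; simp
      rw [this, measure_univ, Finset.prod_range_zero]
  | succ M ih =>
      intro u κ hdisj
      have hsplit : {ω : Ω | ∀ r < M+1, ∑ s ∈ u r, fam X Y s ω = κ r} =
          {ω : Ω | ∀ r < M, ∑ s ∈ u r, fam X Y s ω = κ r} ∩
          {ω : Ω | ∑ s ∈ u M, fam X Y s ω = κ M} := by
        ext ω
        simp only [Set.mem_setOf_eq, Set.mem_inter_iff]
        constructor
        · intro h
          exact ⟨fun r hr => h r (hr.trans (Nat.lt_succ_self M)), h M (Nat.lt_succ_self M)⟩
        · rintro ⟨h1, h2⟩ r hr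
          rcases Nat.lt_succ_iff_lt_or_eq.1 hr with h | h
          · exact h1 r h
          · subst h; exact h2
      have hblk := blk hmX hmY hindep (T := {t : DIdx | t ∉ u M})
        (A := {ω : Ω | ∀ r < M, ∑ s ∈ u r, fam X Y s ω = κ r})
        (B := {ω : Ω | ∑ s ∈ u M, fam X Y s ω = κ M}) ?_ ?_
      · rw [hsplit, hblk, Finset.prod_range_succ,
          ih u κ (fun r hr r' hr' hne => hdisj r (hr.trans (Nat.lt_succ_self M))
            r' (hr'.trans (Nat.lt_succ_self M)) hne)]
      · have : {ω : Ω | ∀ r < M, ∑ s ∈ u r, fam X Y s ω = κ r} =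
            ⋂ (r : ℕ), ⋂ (_ : r < M), (fun ω => ∑ s ∈ u r, fam X Y s ω) ⁻¹' {κ r} := by
          ext ω; simp [Set.mem_iInter]
        rw [this]
        refine MeasurableSet.iInter fun r => MeasurableSet.iInter fun hr => ?_
        refine sum_meas_blk _ _ ?_ (measurableSet_singleton _)
        intro t htr
        have hd := hdisj r (hr.trans (Nat.lt_succ_self M)) M (Nat.lt_succ_self M)
          (Nat.ne_of_lt hr)
        exact fun hM => (Finset.disjoint_left.1 hd) htr hM
      · have : {ω : Ω | ∑ s ∈ u M, fam X Y s ω = κ M} =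
            (fun ω => ∑ s ∈ u M, fam X Y s ω) ⁻¹' {κ M} := rfl
        rw [this]
        refine sum_meas_blk _ _ ?_ (measurableSet_singleton _)
        intro t htM
        simp only [Set.mem_compl_iff, Set.mem_setOf_eq, not_not]
        exact htM


/-- the set of variable indices used by one block at one step -/
def useSet (g off c : ℕ) : Finset DIdx :=
  ((Finset.Ioc off (off+c)).image fun i => Sum.inl (g, i)) ∪
  (((Finset.Ioc off (off+c)).sigma fun i => Finset.Ioo off i).image
    fun p => Sum.inr (g, p.1, p.2))


lemma useSet_union_disjoint (g off c : ℕ) :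
    Disjoint ((Finset.Ioc off (off+c)).image fun i => Sum.inl (g, i) : Finset DIdx)
      ((((Finset.Ioc off (off+c)).sigma fun i => Finset.Ioo off i).image
        fun p => Sum.inr (g, p.1, p.2) : Finset DIdx)) := by
  rw [Finset.disjoint_left]
  intro t ht ht'
  simp only [Finset.mem_image] at ht ht'
  obtain ⟨i, _, rfl⟩ := ht
  obtain ⟨p, _, h⟩ := ht'
  exact absurd h (by simp)

lemma onestep_eq_sum (g off c : ℕ) (ω : Ω) :
    onestep X Y g off c ω = ∑ t ∈ useSet g off c, fam X Y t ω := by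
  unfold useSet
  rw [Finset.sum_union (useSet_union_disjoint g off c), Finset.sum_image
    (by intro a _ b _ h; simpa using h), Finset.sum_image
    (by rintro ⟨a1, a2⟩ _ ⟨b1, b2⟩ _ h; simpa using h)]
  rw [Finset.sum_sigma]
  rfl

lemma useSet_countL (g off c : ℕ) : countL (useSet g off c) = c := by
  classical
  have h1 : (useSet g off c).filter (fun t => t.isLeft = true) =
      ((Finset.Ioc off (off+c)).image fun i => Sum.inl (g, i)) := by
    unfold useSet
    rw [Finset.filter_union]
    have h2 : ((Finset.Ioc off (off+c)).image (fun i => (Sum.inl (g, i) : DIdx))).filter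
        (fun t => t.isLeft = true) = (Finset.Ioc off (off+c)).image fun i => Sum.inl (g, i) := by
      apply Finset.filter_true_of_mem
      intro t ht
      simp only [Finset.mem_image] at ht
      obtain ⟨i, _, rfl⟩ := ht
      rfl
    have h3 : ((((Finset.Ioc off (off+c)).sigma fun i => Finset.Ioo off i).image
        fun p => (Sum.inr (g, p.1, p.2) : DIdx))).filter (fun t => t.isLeft = true) = ∅ := by
      apply Finset.filter_false_of_mem
      intro t ht
      simp only [Finset.mem_image] at ht
      obtain ⟨p, _, rfl⟩ := ht
      simp
    rw [h2, h3, Finset.union_empty]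
  unfold countL
  rw [h1, Finset.card_image_of_injective _ (by intro a b h; simpa using h), Nat.card_Ioc]
  omega

lemma useSet_countR (g off c : ℕ) : countR (useSet g off c) = c.choose 2 := by
  classical
  have h1 : (useSet g off c).filter (fun t => (!t.isLeft) = true) =
      (((Finset.Ioc off (off+c)).sigma fun i => Finset.Ioo off i).image
        fun p => Sum.inr (g, p.1, p.2)) := by
    unfold useSet
    rw [Finset.filter_union]
    have h2 : ((Finset.Ioc off (off+c)).image (fun i => (Sum.inl (g, i) : DIdx))).filter
        (fun t => (!t.isLeft) = true) = ∅ := by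
      apply Finset.filter_false_of_mem
      intro t ht
      simp only [Finset.mem_image] at ht
      obtain ⟨i, _, rfl⟩ := ht
      simp
    have h3 : ((((Finset.Ioc off (off+c)).sigma fun i => Finset.Ioo off i).image
        fun p => (Sum.inr (g, p.1, p.2) : DIdx))).filter (fun t => (!t.isLeft) = true) =
        (((Finset.Ioc off (off+c)).sigma fun i => Finset.Ioo off i).image
        fun p => Sum.inr (g, p.1, p.2)) := by
      apply Finset.filter_true_of_mem
      intro t ht
      simp only [Finset.mem_image] at ht
      obtain ⟨p, _, rfl⟩ := ht
      rfl
    rw [h2, h3, Finset.empty_union]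
  unfold countR
  rw [h1, Finset.card_image_of_injective _
    (by rintro ⟨a1, a2⟩ ⟨b1, b2⟩ h; simpa using h), Finset.card_sigma]
  have h4 : ∀ i ∈ Finset.Ioc off (off+c), (Finset.Ioo off i).card = i - off - 1 := by
    intro i _; rw [Nat.card_Ioo]
  rw [Finset.sum_congr rfl h4]
  have h5 : Finset.Ioc off (off+c) = Finset.Ico (off+1) (off+c+1) := by
    ext i; simp [Nat.lt_succ_iff]
  rw [h5, Finset.sum_Ico_eq_sum_range]
  have h6 : ∀ i ∈ Finset.range (off+c+1 - (off+1)), (off + 1 + i) - off - 1 = i := by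
    intro i _; omega
  rw [Finset.sum_congr rfl h6]
  have h7 : off + c + 1 - (off + 1) = c := by omega
  rw [h7, Finset.sum_range_id, Nat.choose_two_right]

lemma useSet_disjoint {g off c off' c' : ℕ}
    (h : off + c ≤ off' ∨ off' + c' ≤ off) :
    Disjoint (useSet g off c) (useSet g off' c') := by
  rw [Finset.disjoint_left]
  rintro (⟨gi, i⟩ | ⟨gi, i, j⟩) ht ht' <;>
  · unfold useSet at ht ht'
    simp only [Finset.mem_union, Finset.mem_image, Finset.mem_sigma, Finset.mem_Ioc,
      Finset.mem_Ioo, Sum.inl.injEq, Sum.inr.injEq, Prod.mk.injEq] at ht ht'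
    rcases ht with ⟨a, ha, h1, h2⟩ | ⟨p, hp, h1⟩ <;> rcases ht' with ⟨a', ha', h1', h2'⟩ |
      ⟨p', hp', h1'⟩ <;> simp_all <;> omega


/-! ### the key identity -/

def extM {M : ℕ} (κ : Fin M → ℕ) : ℕ → ℕ := fun s => if h : s < M then κ ⟨s, h⟩ else 0

lemma extM_lt {M : ℕ} (κ : Fin M → ℕ) (s : Fin M) : extM κ s.1 = κ s := by
  unfold extM; rw [dif_pos s.2]

lemma extM_support {M : ℕ} (κ : Fin M → ℕ) : ∀ r, M ≤ r → extM κ r = 0 := by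
  intro r hr; unfold extM; rw [dif_neg (by omega)]

lemma fam_meas_biSup (T : Set DIdx) {t : DIdx} (ht : t ∈ T) :
    Measurable[⨆ t' ∈ T, MeasurableSpace.comap (fam X Y t') inferInstance] (fam X Y t) :=
  measurable_iff_comap_le.2
    (le_biSup (fun t' : DIdx => MeasurableSpace.comap (fam X Y t') inferInstance) ht)

/-- the starting vector: `m` subfamilies of one individual each -/
def uvec (m : ℕ) : ℕ → ℕ := fun r => if r < m then 1 else 0

lemma uvec_support (m : ℕ) : ∀ r, m ≤ r → uvec m r = 0 := by
  intro r hr; unfold uvec; rw [if_neg (by omega)]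

lemma offs_uvec (m : ℕ) : offs (uvec m) m = m := by
  unfold offs uvec
  rw [Finset.sum_congr rfl (fun r hr => if_pos (Finset.mem_range.1 hr))]
  simp

lemma key (hmX : ∀ g i, Measurable (X g i)) (hmY : ∀ g i j, Measurable (Y g i j))
    (hindep : iIndepFun (fam X Y) P)
    (hdX : ∀ g i, P.map (X g i) = Lo.toMeasure)
    (hdY : ∀ g i j, P.map (Y g i j) = Lc.toMeasure) :
    ∀ (G g₀ M : ℕ) (v : ℕ → ℕ), (∀ r, M ≤ r → v r = 0) →
    P {ω | ∀ r < M, WitV X Y G g₀ v ω r = 0} =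
      ∏ r ∈ Finset.range M, pext Lo Lc G (v r) := by
  intro G
  induction G with
  | zero =>
      intro g₀ M v hv
      by_cases hall : ∀ r < M, v r = 0
      · have hset : {ω : Ω | ∀ r < M, WitV X Y 0 g₀ v ω r = 0} = Set.univ := by
          ext ω
          simp only [WitV_zero, Set.mem_univ, iff_true, Set.mem_setOf_eq]
          exact hall
        rw [hset, measure_univ]
        symm
        apply Finset.prod_eq_one
        intro r hr
        rw [pext_zero, if_pos (hall r (Finset.mem_range.1 hr))]
      · push_neg at hall
        obtain ⟨r, hr, hvr⟩ := hall
        have hset : {ω : Ω | ∀ r < M, WitV X Y 0 g₀ v ω r = 0} = ∅ := by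
          ext ω
          simp only [WitV_zero, Set.mem_empty_iff_false, iff_false, Set.mem_setOf_eq]
          exact fun h => hvr (h r hr)
        rw [hset, measure_empty]
        symm
        apply Finset.prod_eq_zero (Finset.mem_range.2 hr)
        rw [pext_zero, if_neg hvr]
  | succ G ih =>
      intro g₀ M v hv
      set A : (Fin M → ℕ) → Set Ω :=
        fun κ => {ω | ∀ r < M, stepVec X Y (g₀+1) v ω r = extM κ r} with hAdef
      set B : (Fin M → ℕ) → Set Ω :=
        fun κ => {ω | ∀ r < M, WitV X Y G (g₀+1) (extM κ) ω r = 0} with hBdef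
      have hdecomp : {ω : Ω | ∀ r < M, WitV X Y (G+1) g₀ v ω r = 0} =
          ⋃ κ : Fin M → ℕ, (A κ ∩ B κ) := by
        ext ω
        simp only [Set.mem_iUnion, Set.mem_inter_iff, Set.mem_setOf_eq, hAdef, hBdef]
        constructor
        · intro h
          refine ⟨fun s => stepVec X Y (g₀+1) v ω s.1, fun r hr => ?_, fun r hr => ?_⟩
          · rw [show extM (fun s : Fin M => stepVec X Y (g₀+1) v ω s.1) r =
              stepVec X Y (g₀+1) v ω r from extM_lt _ ⟨r, hr⟩]
          · have hc : WitV X Y G (g₀+1) (extM (fun s : Fin M => stepVec X Y (g₀+1) v ω s.1)) ω r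
                = WitV X Y G (g₀+1) (stepVec X Y (g₀+1) v ω) ω r :=
              WitV_congr _ _ _ _ fun s hs => extM_lt _ ⟨s, lt_of_le_of_lt hs hr⟩
            rw [hc, ← WitV_succ]
            exact h r hr
        · rintro ⟨κ, hA, hB⟩ r hr
          rw [WitV_succ]
          have hc : WitV X Y G (g₀+1) (stepVec X Y (g₀+1) v ω) ω r
              = WitV X Y G (g₀+1) (extM κ) ω r :=
            WitV_congr _ _ _ _ fun s hs => hA s (lt_of_le_of_lt hs hr)
          rw [hc]
          exact hB r hr
      have hXg1 : ∀ i, Measurable (X (g₀+1) i) := fun i => hmX _ i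
      have hYg1 : ∀ i j, Measurable (Y (g₀+1) i j) := fun i j => hmY _ i j
      have hAmeas : ∀ κ : Fin M → ℕ, MeasurableSet (A κ) := by
        intro κ
        have h : A κ = ⋂ (r : ℕ), ⋂ (_ : r < M),
            (fun ω => stepVec X Y (g₀+1) v ω r) ⁻¹' {extM κ r} := by
          ext ω; simp [hAdef, Set.mem_iInter]
        rw [h]
        exact MeasurableSet.iInter fun r => MeasurableSet.iInter fun hr =>
          (stepVec_meas hXg1 hYg1 v r) (measurableSet_singleton _)
      have hBmeas : ∀ κ : Fin M → ℕ, MeasurableSet (B κ) := by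
        intro κ
        have h : B κ = ⋂ (r : ℕ), ⋂ (_ : r < M),
            (fun ω => WitV X Y G (g₀+1) (extM κ) ω r) ⁻¹' {0} := by
          ext ω; simp [hBdef, Set.mem_iInter]
        rw [h]
        exact MeasurableSet.iInter fun r => MeasurableSet.iInter fun hr =>
          (WitV_meas G (g₀+1) (fun g i _ => hmX g i) (fun g i j _ => hmY g i j) (extM κ) r)
            (measurableSet_singleton _)
      have hdisj : Pairwise (Function.onFun Disjoint fun κ : Fin M → ℕ => A κ ∩ B κ) := by
        intro κ κ' hne
        simp only [Function.onFun]
        refine Set.disjoint_left.2 fun ω hω hω' => ?_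
        apply hne
        funext s
        have h1 := hω.1 s.1 s.2
        have h2 := hω'.1 s.1 s.2
        rw [extM_lt κ s] at h1
        rw [extM_lt κ' s] at h2
        rw [← h1, ← h2]
      rw [hdecomp, measure_iUnion hdisj fun κ => (hAmeas κ).inter (hBmeas κ)]
      have hdisj' : ∀ r < M, ∀ r' < M, r ≠ r' →
          Disjoint (useSet (g₀+1) (offs v r) (v r)) (useSet (g₀+1) (offs v r') (v r')) := by
        intro r _ r' _ hne
        apply useSet_disjoint
        rcases Nat.lt_or_ge r r' with hlt | hge
        · left; rw [← offs_succ]; exact offs_mono v hlt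
        · right; rw [← offs_succ]; exact offs_mono v (by omega)
      have hfact : ∀ κ : Fin M → ℕ, P (A κ ∩ B κ) =
          ∏ s : Fin M, (Dconv Lo Lc (v s.1) ((v s.1).choose 2) (κ s) * pext Lo Lc G (κ s)) := by
        intro κ
        have hAblk : MeasurableSet[⨆ t ∈ {t : DIdx | dGen t ≤ g₀ + 1},
            MeasurableSpace.comap (fam X Y t) inferInstance] (A κ) := by
          have h : A κ = ⋂ (r : ℕ), ⋂ (_ : r < M),
              (fun ω => stepVec X Y (g₀+1) v ω r) ⁻¹' {extM κ r} := by
            ext ω; simp [hAdef, Set.mem_iInter]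
          rw [h]
          refine MeasurableSet.iInter fun r => MeasurableSet.iInter fun hr => ?_
          refine stepVec_meas ?_ ?_ v r (measurableSet_singleton _)
          · intro i
            exact fam_meas_biSup _
              (show (Sum.inl (g₀+1, i) : DIdx) ∈ {t : DIdx | dGen t ≤ g₀ + 1} from Set.mem_setOf_eq ▸ le_rfl)
          · intro i j
            exact fam_meas_biSup _
              (show (Sum.inr (g₀+1, i, j) : DIdx) ∈ {t : DIdx | dGen t ≤ g₀ + 1} from Set.mem_setOf_eq ▸ le_rfl)
        have hBblk : MeasurableSet[⨆ t ∈ {t : DIdx | dGen t ≤ g₀ + 1}ᶜ,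
            MeasurableSpace.comap (fam X Y t) inferInstance] (B κ) := by
          have h : B κ = ⋂ (r : ℕ), ⋂ (_ : r < M),
              (fun ω => WitV X Y G (g₀+1) (extM κ) ω r) ⁻¹' {0} := by
            ext ω; simp [hBdef, Set.mem_iInter]
          rw [h]
          refine MeasurableSet.iInter fun r => MeasurableSet.iInter fun hr => ?_
          refine WitV_meas G (g₀+1) ?_ ?_ (extM κ) r (measurableSet_singleton _)
          · intro g i hg
            exact fam_meas_biSup _
              (show (Sum.inl (g, i) : DIdx) ∈ {t : DIdx | dGen t ≤ g₀ + 1}ᶜ from by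
                simp only [Set.mem_compl_iff, Set.mem_setOf_eq, dGen, Sum.elim_inl]; omega)
          · intro g i j hg
            exact fam_meas_biSup _
              (show (Sum.inr (g, i, j) : DIdx) ∈ {t : DIdx | dGen t ≤ g₀ + 1}ᶜ from by
                simp only [Set.mem_compl_iff, Set.mem_setOf_eq, dGen, Sum.elim_inr]; omega)
        rw [blk hmX hmY hindep _ hAblk hBblk]
        have hPA : P (A κ) =
            ∏ r ∈ Finset.range M, Dconv Lo Lc (v r) ((v r).choose 2) (extM κ r) := by
          have hAeq : A κ = {ω | ∀ r < M,
              ∑ t ∈ useSet (g₀+1) (offs v r) (v r), fam X Y t ω = extM κ r} := by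
            ext ω
            simp only [hAdef, Set.mem_setOf_eq]
            constructor
            · intro h r hr
              rw [← onestep_eq_sum]
              exact h r hr
            · intro h r hr
              have h2 := h r hr
              rw [← onestep_eq_sum] at h2
              exact h2
          rw [hAeq, joint hmX hmY hindep hdX hdY M _ _ hdisj']
          refine Finset.prod_congr rfl fun r _ => ?_
          rw [sumlaw hmX hmY hindep hdX hdY, useSet_countL, useSet_countR]
        have hPB : P (B κ) = ∏ r ∈ Finset.range M, pext Lo Lc G (extM κ r) :=
          ih (g₀+1) M (extM κ) (extM_support κ)
        rw [hPA, hPB, ← Finset.prod_mul_distrib,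
          ← Fin.prod_univ_eq_prod_range
            (fun r => Dconv Lo Lc (v r) ((v r).choose 2) (extM κ r) *
              pext Lo Lc G (extM κ r)) M]
        exact Finset.prod_congr rfl fun s _ => by rw [extM_lt κ s]
      rw [tsum_congr hfact,
        tsum_prod_fin M (fun s n => Dconv Lo Lc (v s.1) ((v s.1).choose 2) n * pext Lo Lc G n),
        ← Fin.prod_univ_eq_prod_range (fun r => pext Lo Lc (G+1) (v r)) M]
      exact Finset.prod_congr rfl fun s _ => (pext_succ Lo Lc G (v s.1)).symm

end DBPCaux

/-- A discrete-time branching process with cooperation (DBPC) with offspring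
distribution `Lo`, cooperation distribution `Lc`, started at `k₀`. -/
structure DBPC {Ω : Type*} [MeasurableSpace Ω] (P : Measure Ω)
    (Lo Lc : PMF ℕ) (k₀ : ℕ) where
  /-- offspring variables `X g i` -/
  X : ℕ → ℕ → Ω → ℕ
  /-- cooperation variables `Y g i j` -/
  Y : ℕ → ℕ → ℕ → Ω → ℕ
  /-- the process -/
  Z : ℕ → Ω → ℕ
  measX : ∀ g i, Measurable (X g i)
  measY : ∀ g i j, Measurable (Y g i j)
  measZ : ∀ g, Measurable (Z g)
  indep : iIndepFun
    (fun p : (ℕ × ℕ) ⊕ (ℕ × ℕ × ℕ) =>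
      Sum.elim (fun q : ℕ × ℕ => X q.1 q.2)
        (fun q : ℕ × ℕ × ℕ => Y q.1 q.2.1 q.2.2) p) P
  distX : ∀ g i, P.map (X g i) = Lo.toMeasure
  distY : ∀ g i j, P.map (Y g i j) = Lc.toMeasure
  init : ∀ᵐ ω ∂P, Z 0 ω = k₀
  step : ∀ g : ℕ, ∀ᵐ ω ∂P, Z (g + 1) ω =
    (∑ i ∈ Finset.Icc 1 (Z g ω), X (g + 1) i ω) +
      ∑ i ∈ Finset.Icc 1 (Z g ω), ∑ j ∈ Finset.Ico 1 i, Y (g + 1) i j ω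

/-- The mean of a probability distribution on `ℕ`. -/
noncomputable def pmfMean (L : PMF ℕ) : ℝ := ∑' j : ℕ, (j : ℝ) * (L j).toReal

/-- The variance of a probability distribution on `ℕ`. -/
noncomputable def pmfVar (L : PMF ℕ) : ℝ :=
  ∑' j : ℕ, ((j : ℝ) - pmfMean L) ^ 2 * (L j).toReal

section MainHelpers

open DBPCaux

variable {Ω : Type*} [MeasurableSpace Ω] {P : Measure Ω} [IsProbabilityMeasure P]
  {Lo Lc : PMF ℕ} {k : ℕ}

lemma DBPC.fam_indep (B : DBPC P Lo Lc k) :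
    iIndepFun (DBPCaux.fam B.X B.Y) P := B.indep

lemma DBPC.step_ae (B : DBPC P Lo Lc k) :
    ∀ᵐ ω ∂P, ∀ g, B.Z (g+1) ω = onestep B.X B.Y (g+1) 0 (B.Z g ω) ω := by
  rw [MeasureTheory.ae_all_iff]
  intro g
  filter_upwards [B.step g] with ω hω
  rw [hω]
  unfold onestep
  have h1 : Finset.Ioc 0 (0 + B.Z g ω) = Finset.Icc 1 (B.Z g ω) := by
    ext x; simp only [Finset.mem_Ioc, Finset.mem_Icc]; omega
  have h2 : ∀ i : ℕ, Finset.Ioo 0 i = Finset.Ico 1 i := by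
    intro i; ext x; simp only [Finset.mem_Ioo, Finset.mem_Ico]; omega
  rw [h1]
  have h3 : (∑ i ∈ Finset.Icc 1 (B.Z g ω), ∑ j ∈ Finset.Ioo 0 i, B.Y (g+1) i j ω)
      = ∑ i ∈ Finset.Icc 1 (B.Z g ω), ∑ j ∈ Finset.Ico 1 i, B.Y (g+1) i j ω :=
    Finset.sum_congr rfl fun i _ => by rw [h2]
  first
  | rfl
  | rw [h3]

/-- the subfamily processes are dominated by the full process -/
lemma DBPC.wit_le (B : DBPC P Lo Lc k) :
    ∀ᵐ ω ∂P, ∀ G, offs (WitV B.X B.Y G 0 (uvec k) ω) k ≤ B.Z G ω := by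
  filter_upwards [B.init, B.step_ae] with ω h0 hs
  intro G
  induction G with
  | zero =>
      rw [h0]
      simp only [WitV_zero]
      rw [offs_uvec]
  | succ G ihG =>
      rw [hs G]
      calc offs (WitV B.X B.Y (G+1) 0 (uvec k) ω) k
          = ∑ r ∈ Finset.range k, onestep B.X B.Y (0+G+1)
              (offs (WitV B.X B.Y G 0 (uvec k) ω) r) (WitV B.X B.Y G 0 (uvec k) ω r) ω := by
            rw [show WitV B.X B.Y (G+1) 0 (uvec k) ω =
              stepVec B.X B.Y (0+G+1) (WitV B.X B.Y G 0 (uvec k) ω) ω from WitV_snoc G 0 _ ω]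
            rfl
        _ ≤ onestep B.X B.Y (0+G+1) 0 (B.Z G ω) ω :=
            stepSum_le _ k (B.Z G ω) (0+G+1) ω ihG
        _ = onestep B.X B.Y (G+1) 0 (B.Z G ω) ω := by rw [Nat.zero_add]

/-- for one starting individual the subfamily process is the process itself -/
lemma DBPC.wit_eq (B : DBPC P Lo Lc 1) :
    ∀ᵐ ω ∂P, ∀ G, B.Z G ω = WitV B.X B.Y G 0 (uvec 1) ω 0 := by
  filter_upwards [B.init, B.step_ae] with ω h0 hs
  intro G
  induction G with
  | zero => exact h0
  | succ G ihG =>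
      rw [hs G, ihG,
        show WitV B.X B.Y (G+1) 0 (uvec 1) ω =
          stepVec B.X B.Y (0+G+1) (WitV B.X B.Y G 0 (uvec 1) ω) ω from WitV_snoc G 0 _ ω]
      rw [Nat.zero_add]
      rfl

/-- a.s., once the process hits `0` it stays there -/
lemma DBPC.zero_stable (B : DBPC P Lo Lc k) :
    ∀ᵐ ω ∂P, ∀ g g', g ≤ g' → B.Z g ω = 0 → B.Z g' ω = 0 := by
  filter_upwards [B.step_ae] with ω hs
  intro g g' hle h0
  obtain ⟨d, rfl⟩ := Nat.exists_eq_add_of_le hle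
  induction d with
  | zero => exact h0
  | succ d ih =>
      rw [show g + (d+1) = (g+d) + 1 from rfl, hs (g+d), ih (by omega), onestep_zero]

/-- the extinction probability as a limit -/
lemma DBPC.ext_prob (B : DBPC P Lo Lc k) :
    P {ω | ∃ g, 1 ≤ g ∧ B.Z g ω = 0} = ⨆ G, P {ω | B.Z (G+1) ω = 0} := by
  have hU : {ω | ∃ g, 1 ≤ g ∧ B.Z g ω = 0} =
      ⋃ G, {ω | ∃ g, 1 ≤ g ∧ g ≤ G + 1 ∧ B.Z g ω = 0} := by
    ext ω
    simp only [Set.mem_setOf_eq, Set.mem_iUnion]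
    constructor
    · rintro ⟨g, h1, h3⟩; exact ⟨g, g, h1, by omega, h3⟩
    · rintro ⟨G, g, h1, _, h3⟩; exact ⟨g, h1, h3⟩
  have hmono : Monotone fun G => {ω | ∃ g, 1 ≤ g ∧ g ≤ G + 1 ∧ B.Z g ω = 0} := by
    intro G G' h ω
    rintro ⟨g, h1, h2, h3⟩
    exact ⟨g, h1, by omega, h3⟩
  rw [hU, Directed.measure_iUnion hmono.directed_le]
  refine iSup_congr fun G => ?_
  apply measure_congr
  rw [Filter.eventuallyEq_set]
  filter_upwards [B.zero_stable] with ω hstab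
  constructor
  · rintro ⟨g, h1, h2, h3⟩
    exact hstab g (G+1) h2 h3
  · intro h
    exact ⟨G+1, by omega, le_rfl, h⟩

/-- identification of the finite-horizon extinction probabilities for one individual -/
lemma DBPC.ext_eq_pext (B : DBPC P Lo Lc 1) (G : ℕ) :
    P {ω | B.Z G ω = 0} = pext Lo Lc G 1 := by
  have hsets : {ω | B.Z G ω = 0} =ᵐ[P]
      {ω | ∀ r < 1, WitV B.X B.Y G 0 (uvec 1) ω r = 0} := by
    rw [Filter.eventuallyEq_set]
    filter_upwards [B.wit_eq] with ω hω
    constructor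
    · intro h r hr
      obtain rfl : r = 0 := by omega
      rw [← hω G]; exact h
    · intro h
      rw [hω G]; exact h 0 Nat.one_pos
  rw [measure_congr hsets,
    key B.measX B.measY B.fam_indep B.distX B.distY G 0 1 (uvec 1) (uvec_support 1),
    Finset.prod_range_one]
  rfl

/-- the finite-horizon bound for `m` individuals -/
lemma DBPC.ext_le_pow {m : ℕ} (B : DBPC P Lo Lc m) (G : ℕ) :
    P {ω | B.Z G ω = 0} ≤ (pext Lo Lc G 1) ^ m := by
  have hle : P {ω | B.Z G ω = 0} ≤
      P {ω | ∀ r < m, WitV B.X B.Y G 0 (uvec m) ω r = 0} := by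
    apply measure_mono_ae
    filter_upwards [B.wit_le] with ω hω
    intro h
    have h0 : offs (WitV B.X B.Y G 0 (uvec m) ω) m = 0 := le_antisymm (h ▸ hω G) (Nat.zero_le _)
    intro r hr
    exact Finset.sum_eq_zero_iff.1 h0 r (Finset.mem_range.2 hr)
  refine hle.trans ?_
  rw [key B.measX B.measY B.fam_indep B.distX B.distY G 0 m (uvec m) (uvec_support m)]
  rw [Finset.prod_congr rfl fun r hr =>
    (by rw [show uvec m r = 1 from if_pos (Finset.mem_range.1 hr)] :
      pext Lo Lc G (uvec m r) = pext Lo Lc G 1)]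
  rw [Finset.prod_const, Finset.card_range]

end MainHelpers

/-- Superbranching property: for a DBPC with the same offspring and
cooperation distributions, the extinction probability started from `m ≥ 1`
individuals is at most the `m`-th power of the extinction probability `q`
started from one individual. -/
theorem dbpc_extinction_probability_power_bound
    {Ω₁ : Type*} [MeasurableSpace Ω₁] (P₁ : Measure Ω₁) [IsProbabilityMeasure P₁]
    {Ωₘ : Type*} [MeasurableSpace Ωₘ] (Pₘ : Measure Ωₘ) [IsProbabilityMeasure Pₘ]
    (Lo Lc : PMF ℕ) (m : ℕ) (hm : 1 ≤ m)
    (B₁ : DBPC P₁ Lo Lc 1) (Bₘ : DBPC Pₘ Lo Lc m) :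
    (Pₘ {ω | ∃ g : ℕ, 1 ≤ g ∧ Bₘ.Z g ω = 0}).toReal ≤
      ((P₁ {ω | ∃ g : ℕ, 1 ≤ g ∧ B₁.Z g ω = 0}).toReal) ^ m := by
  set q : ℝ≥0∞ := P₁ {ω | ∃ g : ℕ, 1 ≤ g ∧ B₁.Z g ω = 0} with hq
  have h4 : ∀ G : ℕ, DBPCaux.pext Lo Lc (G+1) 1 ≤ q := by
    intro G
    rw [← B₁.ext_eq_pext (G+1), hq]
    exact measure_mono fun ω h => ⟨G+1, by omega, h⟩
  have h5 : Pₘ {ω | ∃ g : ℕ, 1 ≤ g ∧ Bₘ.Z g ω = 0} ≤ q ^ m := by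
    rw [Bₘ.ext_prob]
    refine iSup_le fun G => ?_
    exact (Bₘ.ext_le_pow (G+1)).trans (pow_le_pow_left' (h4 G) m)
  have hfin : q ^ m ≠ ∞ := ENNReal.pow_ne_top (measure_ne_top _ _)
  calc (Pₘ {ω | ∃ g : ℕ, 1 ≤ g ∧ Bₘ.Z g ω = 0}).toReal
      ≤ (q ^ m).toReal := ENNReal.toReal_mono hfin h5
    _ = q.toReal ^ m := ENNReal.toReal_pow _ _
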